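/- Let L be a finite modular lattice, let l ∈ ℕ, let C ⊆ L_l be a constant height code with minimum distance D(C) ≥ D, and let r := ⌊(D−1)/2⌋. Then for every t ∈ ℕ with max{0, l−r} ≤ t ≤ min{h(1), l+r}, one has |C| ≤ |L_t| / min_{u ∈ L_l} |S(u,r,t)|. -/

import Mathlib

/-- The height of an element: the greatest length of chains from `⊥` to `u`. -/
noncomputable def ht {L : Type*} [Preorder L] (u : L) : ℕ := (Order.height u).toNat

/-- An element `z` is a cycle if the interval `[⊥, z]` is a chain. -/
def IsCycle {L : Type*} [Lattice L] [BoundedOrder L] (z : L) : Prop :=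
  IsChain (· ≤ ·) (Set.Icc (⊥ : L) z)

/-- An element `z` is a dual cycle if the interval `[z, ⊤]` is a chain. -/
def IsDualCycle {L : Type*} [Lattice L] [BoundedOrder L] (z : L) : Prop :=
  IsChain (· ≤ ·) (Set.Icc z (⊤ : L))

/-- A lattice is semi-primary if every element is a join of cycles and a meet of
dual cycles. -/
def IsSemiPrimary (L : Type*) [Lattice L] [BoundedOrder L] : Prop :=
  ∀ u : L, (∃ s : Finset L, (∀ z ∈ s, IsCycle z) ∧ u = s.sup id) ∧
           (∃ s : Finset L, (∀ z ∈ s, IsDualCycle z) ∧ u = s.inf id)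

/-- A finite family of lattice elements is independent. -/
def IndepFun {L : Type*} [Lattice L] [BoundedOrder L] {n : ℕ} (z : Fin n → L) : Prop :=
  ∀ i, ((Finset.univ.erase i).sup z) ⊓ z i = ⊥

/-- A partition is (represented by) a multiset of positive natural numbers. -/
def IsPartition (μ : Multiset ℕ) : Prop := ∀ p ∈ μ, 0 < p

/-- The `i`-th largest part of a partition (0-indexed, 0 if out of range). -/
def partGet (μ : Multiset ℕ) (i : ℕ) : ℕ := ((μ.sort (· ≤ ·)).reverse).getD i 0

/-- Componentwise order on partitions: `μ ≤ λ` iff `μᵢ ≤ λᵢ` for all `i`. -/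
def PartLE (μ lam : Multiset ℕ) : Prop := ∀ i, partGet μ i ≤ partGet lam i

/-- For `λ = (sⁿ)` and `μ ≤ λ`, the partition `λ − μ = (s − μₙ, …, s − μ₁)`. -/
def partSub (s n : ℕ) (μ : Multiset ℕ) : Multiset ℕ :=
  Multiset.filter (fun x => 0 < x)
    (↑((List.range n).map (fun i => s - partGet μ i)) : Multiset ℕ)

/-- `u` has type `μ`: `u` is a join of independent nonzero cycles whose multiset of
heights equals `μ`. -/
def IsTypeOf {L : Type*} [Lattice L] [BoundedOrder L] (u : L) (μ : Multiset ℕ) : Prop :=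
  ∃ (n : ℕ) (z : Fin n → L), (∀ i, IsCycle (z i)) ∧ (∀ i, z i ≠ ⊥) ∧ IndepFun z ∧
    u = Finset.univ.sup z ∧ (↑(List.ofFn (fun i => ht (z i))) : Multiset ℕ) = μ

/-- The lattice metric `d(u,v) = h(u ∨ v) − h(u ∧ v)`. -/
noncomputable def dLat {L : Type*} [Lattice L] (u v : L) : ℕ := ht (u ⊔ v) - ht (u ⊓ v)

/-- The sphere of radius `r` centered at `u`. -/
def sph {L : Type*} [Lattice L] (u : L) (r : ℕ) : Set L := {v | dLat u v ≤ r}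

/-- The `t`-th layer of the sphere of radius `r` centered at `u`. -/
def sphH {L : Type*} [Lattice L] (u : L) (r t : ℕ) : Set L :=
  {v | dLat u v ≤ r ∧ ht v = t}

/-- The elements of type `μ` in the sphere of radius `r` centered at `u`. -/
def sphT {L : Type*} [Lattice L] [BoundedOrder L] (u : L) (r : ℕ) (μ : Multiset ℕ) :
    Set L := {v | dLat u v ≤ r ∧ IsTypeOf v μ}

/-- A finite semi-primary lattice is down-enumerable. -/
def DownEnum (L : Type*) [Lattice L] [BoundedOrder L] : Prop :=
  ∀ (u v : L) (φ μ : Multiset ℕ), IsTypeOf u φ → IsTypeOf v φ →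
    Nat.card {w : L // IsTypeOf w μ ∧ w ≤ u} = Nat.card {w : L // IsTypeOf w μ ∧ w ≤ v}

/-- A finite semi-primary lattice is up-enumerable. -/
def UpEnum (L : Type*) [Lattice L] [BoundedOrder L] : Prop :=
  ∀ (u v : L) (φ μ : Multiset ℕ), IsTypeOf u φ → IsTypeOf v φ →
    Nat.card {w : L // IsTypeOf w μ ∧ u ≤ w} = Nat.card {w : L // IsTypeOf w μ ∧ v ≤ w}

/-- A lattice is enumerable if it is both down- and up-enumerable. -/
def Enumerable (L : Type*) [Lattice L] [BoundedOrder L] : Prop := DownEnum L ∧ UpEnum L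

/-- `α(φ,μ)`: the number of elements of type `μ` below a (any) element of type `φ`. -/
noncomputable def alphaP (L : Type*) [Lattice L] [BoundedOrder L] (φ μ : Multiset ℕ) : ℕ :=
  sSup {n | ∃ u : L, IsTypeOf u φ ∧ n = Nat.card {w : L // IsTypeOf w μ ∧ w ≤ u}}

/-- `β(φ,μ)`: the number of elements of type `μ` above a (any) element of type `φ`. -/
noncomputable def betaP (L : Type*) [Lattice L] [BoundedOrder L] (φ μ : Multiset ℕ) : ℕ :=
  sSup {n | ∃ u : L, IsTypeOf u φ ∧ n = Nat.card {w : L // IsTypeOf w μ ∧ u ≤ w}}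

/-- `α(μ, r₁, …, rₙ)`: the number of chains `x₁ ≤ ⋯ ≤ xₙ ≤ w` with `h(xᵢ) = rᵢ`,
below a (any) element `w` of type `μ`. -/
noncomputable def alphaChain (L : Type*) [Lattice L] [BoundedOrder L] (μ : Multiset ℕ)
    {n : ℕ} (r : Fin n → ℕ) : ℕ :=
  sSup {m | ∃ w : L, IsTypeOf w μ ∧
    m = Nat.card {x : Fin n → L // (∀ i, ht (x i) = r i) ∧ Monotone x ∧ ∀ i, x i ≤ w}}


section SpherePackingAux

open Order

section fin
variable {α : Type*} [Preorder α] [Finite α]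

private lemma height_lt_top' (x : α) : Order.height x < ⊤ := by
  have := Fintype.ofFinite α
  refine lt_of_le_of_lt (Order.height_le fun p _ => ?_) (?_ : ((Fintype.card α : ℕ) : ℕ∞) < ⊤)
  · exact_mod_cast p.length_lt_card.le
  · exact ENat.coe_lt_top _

private lemma height_eq_ht (x : α) : Order.height x = ((Order.height x).toNat : ℕ∞) :=
  (ENat.coe_toNat (height_lt_top' x).ne_top).symm

end fin

lemma height_eq_ht' {α : Type*} [Preorder α] [Finite α] (x : α) :
    height x = (ht x : ℕ∞) := height_eq_ht x


set_option linter.unusedSectionVars false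

section modlat
variable {L : Type*} [Lattice L] [IsModularLattice L] [Finite L]

lemma core_lemma_aux (x : L) (n : ℕ) : ∀ p : LTSeries L, p.length = n →
    (p.length : ℕ∞) ≤ height (p.last ⊓ x) + height (⟨p.last ⊔ x, le_sup_right⟩ : Set.Ici x) := by
  induction n with
  | zero => intro p hn; simp [hn]
  | succ n ih =>
    intro p hn
    rw [hn]
    obtain ⟨q, hqlen, hab⟩ : ∃ q : LTSeries L, q.length = n ∧ q.last < p.last :=
      ⟨p.eraseLast, by simp [RelSeries.eraseLast_length, hn],
        p.eraseLast_last_rel_last (by omega)⟩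
    generalize hA : q.last = a at *
    generalize hB : p.last = b at *
    have hmod : a ⊓ x = b ⊓ x → a ⊔ x = b ⊔ x → False := by
      intro h1 h2
      have e : (a ⊔ x) ⊓ b = a ⊔ (x ⊓ b) := sup_inf_assoc_of_le x hab.le
      rw [h2, inf_eq_right.mpr le_sup_left, inf_comm x b, ← h1,
        sup_eq_left.mpr inf_le_left] at e
      exact hab.ne e.symm
    have IH := ih q hqlen
    rw [hqlen, hA] at IH
    rcases (inf_le_inf_right x hab.le).lt_or_eq with h1 | h1
    · have step : height (a ⊓ x) + 1 ≤ height (b ⊓ x) :=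
        ENat.add_one_le_iff (height_lt_top' _).ne_top |>.mpr
          (height_strictMono h1 (height_lt_top' _))
      have hrel : height (⟨a ⊔ x, le_sup_right⟩ : Set.Ici x)
          ≤ height (⟨b ⊔ x, le_sup_right⟩ : Set.Ici x) :=
        height_mono (by exact Subtype.mk_le_mk.mpr (sup_le_sup_right hab.le x))
      calc ((n + 1 : ℕ) : ℕ∞) = (n : ℕ∞) + 1 := by push_cast; ring
        _ ≤ (height (a ⊓ x) + height (⟨a ⊔ x, le_sup_right⟩ : Set.Ici x)) + 1 := by
            exact add_le_add IH le_rfl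
        _ = (height (a ⊓ x) + 1) + height (⟨a ⊔ x, le_sup_right⟩ : Set.Ici x) := by ring
        _ ≤ height (b ⊓ x) + height (⟨b ⊔ x, le_sup_right⟩ : Set.Ici x) :=
            add_le_add step hrel
    · have hne : a ⊔ x ≠ b ⊔ x := fun h => hmod h1 h
      have h2 : (⟨a ⊔ x, le_sup_right⟩ : Set.Ici x) < ⟨b ⊔ x, le_sup_right⟩ :=
        lt_of_le_of_ne (Subtype.mk_le_mk.mpr (sup_le_sup_right hab.le x))
          (fun h => hne (congrArg Subtype.val h))
      have step : height (⟨a ⊔ x, le_sup_right⟩ : Set.Ici x) + 1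
          ≤ height (⟨b ⊔ x, le_sup_right⟩ : Set.Ici x) :=
        ENat.add_one_le_iff (height_lt_top' _).ne_top |>.mpr
          (height_strictMono h2 (height_lt_top' _))
      have hrel : height (a ⊓ x) ≤ height (b ⊓ x) := by rw [h1]
      calc ((n + 1 : ℕ) : ℕ∞) = (n : ℕ∞) + 1 := by push_cast; ring
        _ ≤ (height (a ⊓ x) + height (⟨a ⊔ x, le_sup_right⟩ : Set.Ici x)) + 1 := by
            exact add_le_add IH le_rfl
        _ = height (a ⊓ x) + (height (⟨a ⊔ x, le_sup_right⟩ : Set.Ici x) + 1) := by ring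
        _ ≤ height (b ⊓ x) + height (⟨b ⊔ x, le_sup_right⟩ : Set.Ici x) :=
            add_le_add hrel step

lemma graded_ge (x w : L) (hw : x ≤ w) :
    height x + height (⟨w, hw⟩ : Set.Ici x) ≤ height w := by
  obtain ⟨p, hp1, hp2⟩ := exists_series_of_height_eq_coe x (height_eq_ht x)
  obtain ⟨q, hq1, hq2⟩ :=
    exists_series_of_height_eq_coe (⟨w, hw⟩ : Set.Ici x) (height_eq_ht _)
  let q' : LTSeries L := q.map Subtype.val (fun _ _ h => h)
  have hq'last : q'.last = w := by
    show (q.last : L) = w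
    rw [hq1]
  have hq'len : q'.length = q.length := rfl
  have hxhead : x ≤ q'.head := (q.head).2
  have key : ((p.length + q'.length : ℕ) : ℕ∞) ≤ height w := by
    rcases hxhead.lt_or_eq with h | h
    · have hconn : p.last < q'.head := by rw [hp1]; exact h
      have hlen := length_le_height_last (p := p.append q' hconn)
      rw [RelSeries.last_append, hq'last, RelSeries.append_length] at hlen
      exact le_trans (Nat.cast_le.mpr (by omega)) hlen
    · have hconn : p.last = q'.head := by rw [hp1]; exact h
      have hlen := length_le_height_last (p := p.smash q' hconn)
      rw [RelSeries.last_smash, hq'last, RelSeries.smash_length] at hlen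
      exact hlen
  rw [hp2, hq'len, hq2] at key
  rw [height_eq_ht x, height_eq_ht (⟨w, hw⟩ : Set.Ici x)]
  exact le_trans (le_of_eq (by push_cast; ring)) key

lemma graded (x w : L) (hw : x ≤ w) :
    height w = height x + height (⟨w, hw⟩ : Set.Ici x) := by
  refine le_antisymm ?_ (graded_ge x w hw)
  refine height_le fun p hp => ?_
  have h := core_lemma_aux x p.length p rfl
  rw [hp] at h
  have e1 : w ⊓ x = x := inf_eq_right.mpr hw
  have e2 : (⟨w ⊔ x, le_sup_right⟩ : Set.Ici x) = ⟨w, hw⟩ :=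
    Subtype.ext (sup_eq_left.mpr hw)
  rw [e1, e2] at h
  exact h

lemma hIci_eq_hIcc (x w : L) (hw : x ≤ w) :
    height (⟨w, hw⟩ : Set.Ici x) = height (⟨w, hw, le_rfl⟩ : Set.Icc x w) := by
  apply le_antisymm
  · refine height_le fun p hp => ?_
    have hle : ∀ i, (p i : L) ≤ w := fun i => by
      have h := p.monotone (Fin.le_last i)
      rw [RelSeries.apply_last, hp] at h
      exact h
    let q : LTSeries (Set.Icc x w) :=
      ⟨p.length, fun i => ⟨(p i : L), (p i).2, hle i⟩, fun i => p.step i⟩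
    have hql : q.last = ⟨w, hw, le_rfl⟩ := by
      apply Subtype.ext
      show (p (Fin.last p.length) : L) = w
      rw [RelSeries.apply_last, hp]
    have := length_le_height_last (p := q)
    rw [hql] at this
    exact this
  · exact height_le_height_apply_of_strictMono
      (fun (z : Set.Icc x w) => (⟨z.1, z.2.1⟩ : Set.Ici x)) (fun _ _ h => h) _

lemma diamond (a b : L) :
    height (⟨a, inf_le_left, le_rfl⟩ : Set.Icc (a ⊓ b) a)
      = height (⟨a ⊔ b, le_sup_right, le_rfl⟩ : Set.Icc b (a ⊔ b)) := by
  have h := height_orderIso (infIccOrderIsoIccSup a b) ⟨a, inf_le_left, le_rfl⟩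
  rw [← h]
  congr 1

lemma height_modular (a b : L) :
    height (a ⊔ b) + height (a ⊓ b) = height a + height b := by
  have h1 := graded b (a ⊔ b) le_sup_right
  have h2 := graded (a ⊓ b) a inf_le_left
  rw [hIci_eq_hIcc] at h1 h2
  have hd := diamond a b
  rw [← hd] at h1
  rw [h1, h2]
  ring

omit [IsModularLattice L] in
lemma ht_mono {u v : L} (h : u ≤ v) : ht u ≤ ht v :=
  ENat.toNat_le_toNat (height_mono h) (height_lt_top' v).ne_top

omit [IsModularLattice L] in
lemma ht_strictMono {u v : L} (h : u < v) : ht u < ht v := by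
  have h2 := height_strictMono h (height_lt_top' u)
  rw [height_eq_ht' u, height_eq_ht' v] at h2
  exact_mod_cast h2

lemma ht_modular (a b : L) : ht (a ⊔ b) + ht (a ⊓ b) = ht a + ht b := by
  have h := height_modular a b
  rw [height_eq_ht' (a ⊔ b), height_eq_ht' (a ⊓ b), height_eq_ht' a, height_eq_ht' b] at h
  exact_mod_cast h

omit [IsModularLattice L] in
lemma dLat_add (u v : L) : dLat u v + ht (u ⊓ v) = ht (u ⊔ v) :=
  Nat.sub_add_cancel (ht_mono inf_le_sup)

lemma dLat_tri (u v w : L) : dLat u v ≤ dLat u w + dLat v w := by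
  have m1 := ht_modular (u ⊔ w) (v ⊔ w)
  have m2 := ht_modular (u ⊓ w) (v ⊓ w)
  have a1 := dLat_add u v
  have a2 := dLat_add u w
  have a3 := dLat_add v w
  have i1 : ht (u ⊔ v) ≤ ht ((u ⊔ w) ⊔ (v ⊔ w)) :=
    ht_mono (sup_le_sup le_sup_left le_sup_left)
  have i2 : ht w ≤ ht ((u ⊔ w) ⊓ (v ⊔ w)) := ht_mono (le_inf le_sup_right le_sup_right)
  have i3 : ht ((u ⊓ w) ⊔ (v ⊓ w)) ≤ ht w := ht_mono (sup_le inf_le_right inf_le_right)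
  have i4 : ht ((u ⊓ w) ⊓ (v ⊓ w)) ≤ ht (u ⊓ v) :=
    ht_mono (le_inf (le_trans inf_le_left inf_le_left)
      (le_trans inf_le_right inf_le_left))
  omega

omit [IsModularLattice L] in
lemma dLat_pos {u v : L} (hne : u ≠ v) : 0 < dLat u v := by
  have hlt : u ⊓ v < u ⊔ v := by
    refine lt_of_le_of_ne inf_le_sup fun h => hne ?_
    have hu : u ≤ v := by
      have h1 : u ≤ u ⊓ v := le_of_le_of_eq (le_sup_left (b := v)) h.symm
      exact h1.trans inf_le_right
    have hv : v ≤ u := by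
      have h1 : v ≤ u ⊓ v := le_of_le_of_eq (le_sup_right (a := u)) h.symm
      exact h1.trans inf_le_left
    exact le_antisymm hu hv
  have := ht_strictMono hlt
  unfold dLat
  omega

lemma sphere_ne [BoundedOrder L] (u : L) (l t r₀ : ℕ) (hu : ht u = l)
    (h1 : l - r₀ ≤ t) (h2 : t ≤ ht (⊤ : L)) (h3 : t ≤ l + r₀) :
    ∃ v : L, dLat u v ≤ r₀ ∧ ht v = t := by
  rcases le_total t l with hc | hc
  · have hh : height u = (l : ℕ∞) := by rw [height_eq_ht' u, hu]
    obtain ⟨p, hp1, hp2⟩ := exists_series_of_height_eq_coe u hh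
    have hi : t < p.length + 1 := by omega
    have hle : p ⟨t, hi⟩ ≤ u := by
      have h := p.monotone (Fin.le_last ⟨t, hi⟩)
      rwa [RelSeries.apply_last, hp1] at h
    have hhv : height (p ⟨t, hi⟩) = ((⟨t, hi⟩ : Fin (p.length + 1)) : ℕ∞) :=
      height_eq_index_of_length_eq_height_last (by rw [hp1, hh, hp2]) ⟨t, hi⟩
    have hvt : ht (p ⟨t, hi⟩) = t := by
      have : height (p ⟨t, hi⟩) = (t : ℕ∞) := hhv
      rw [height_eq_ht' (p ⟨t, hi⟩)] at this
      exact_mod_cast this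
    refine ⟨p ⟨t, hi⟩, ?_, hvt⟩
    have e1 : u ⊔ p ⟨t, hi⟩ = u := sup_eq_left.mpr hle
    have e2 : u ⊓ p ⟨t, hi⟩ = p ⟨t, hi⟩ := inf_eq_right.mpr hle
    unfold dLat
    rw [e1, e2, hu, hvt]
    omega
  · have hhtop := graded u ⊤ le_top
    have hTfin : height (⟨⊤, le_top⟩ : Set.Ici u)
        = ((height (⟨⊤, le_top⟩ : Set.Ici u)).toNat : ℕ∞) := height_eq_ht _
    obtain ⟨p, hp1, hp2⟩ := exists_series_of_height_eq_coe _ hTfin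
    set M := (height (⟨⊤, le_top⟩ : Set.Ici u)).toNat with hM
    have htop : ht (⊤ : L) = l + M := by
      have e : height (⊤ : L) = ((l + M : ℕ) : ℕ∞) := by
        rw [hhtop, height_eq_ht' u, hu, hTfin]
        push_cast
        ring
      rw [show ht (⊤ : L) = (height (⊤ : L)).toNat from rfl, e, ENat.toNat_coe]
    have hk : t - l < p.length + 1 := by omega
    set z := p ⟨t - l, hk⟩ with hz
    have hhz : height z = ((t - l : ℕ) : ℕ∞) := by
      have := height_eq_index_of_length_eq_height_last
        (p := p) (by rw [hp1, hp2]; exact hTfin.symm) ⟨t - l, hk⟩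
      rw [← hz] at this
      exact_mod_cast this
    have hz1 : height (z : L) = (t : ℕ∞) := by
      rw [graded u z.1 z.2, height_eq_ht' u, hu, hhz, ← Nat.cast_add,
        Nat.add_sub_cancel' hc]
    have hzt : ht (z : L) = t := by
      have := hz1
      rw [height_eq_ht' (z : L)] at this
      exact_mod_cast this
    refine ⟨z.1, ?_, hzt⟩
    have e1 : u ⊔ z.1 = z.1 := sup_eq_right.mpr z.2
    have e2 : u ⊓ z.1 = u := inf_eq_left.mpr z.2
    unfold dLat
    rw [e1, e2, hu, hzt]
    omega


end modlat

end SpherePackingAux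

/-- Sphere packing bound in a finite modular lattice: for a constant
height code `C ⊆ L_l` with minimum distance at least `D` and `r := ⌊(D−1)/2⌋`, for every
`t` with `max{0, l−r} ≤ t ≤ min{h(1), l+r}` one has
`|C| ≤ |L_t| / min_{u ∈ L_l} |S(u,r,t)|`. -/
theorem stmt13 {L : Type*} [Lattice L] [IsModularLattice L] [BoundedOrder L] [Fintype L]
    (l D : ℕ) (C : Set L) (hC : C ⊆ {v : L | ht v = l})
    (hmin : ∀ u ∈ C, ∀ v ∈ C, u ≠ v → D ≤ dLat u v)
    (r : ℕ) (hr : r = (D - 1) / 2)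
    (t : ℕ) (htl : l - r ≤ t) (htu : t ≤ min (ht (⊤ : L)) (l + r))
    (m : ℕ) (hm : m = sInf {k : ℕ | ∃ u : L, ht u = l ∧ k = (sphH u r t).ncard}) :
    (C.ncard : ℝ) ≤ ({v : L | ht v = t}.ncard : ℝ) / (m : ℝ) := by

  classical
  rcases C.eq_empty_or_nonempty with hCe | ⟨u₀, hu₀⟩
  · rw [hCe]
    simp
    positivity
  have hu₀l : ht u₀ = l := hC hu₀
  have hsetne : {k : ℕ | ∃ u : L, ht u = l ∧ k = (sphH u r t).ncard}.Nonempty :=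
    ⟨(sphH u₀ r t).ncard, u₀, hu₀l, rfl⟩
  have hmem : m ∈ {k : ℕ | ∃ u : L, ht u = l ∧ k = (sphH u r t).ncard} := by
    rw [hm]; exact Nat.sInf_mem hsetne
  obtain ⟨u₁, hu₁l, hu₁⟩ := hmem
  have hmpos : 0 < m := by
    obtain ⟨v, hv1, hv2⟩ := sphere_ne u₁ l t r hu₁l htl
      (le_trans htu (min_le_left _ _)) (le_trans htu (min_le_right _ _))
    rw [hu₁]
    exact (Set.ncard_pos (Set.toFinite _)).mpr ⟨v, hv1, hv2⟩
  set s := C.toFinset with hs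
  set f : L → Finset L := fun u => (sphH u r t).toFinset with hf
  have hdisj : ∀ u ∈ s, ∀ v ∈ s, u ≠ v → Disjoint (f u) (f v) := by
    intro u hu v hv hne
    rw [Finset.disjoint_left]
    intro w hw1 hw2
    simp only [hf] at hw1 hw2
    rw [Set.mem_toFinset] at hw1 hw2
    simp only [sphH, Set.mem_setOf_eq] at hw1 hw2
    have hd : dLat u v ≤ r + r :=
      le_trans (dLat_tri u v w) (add_le_add hw1.1 hw2.1)
    have hD := hmin u (by rwa [hs, Set.mem_toFinset] at hu)
      v (by rwa [hs, Set.mem_toFinset] at hv) hne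
    have hpos := dLat_pos hne
    omega
  have hcard : s.card * m ≤ (s.biUnion f).card := by
    rw [Finset.card_biUnion hdisj]
    calc s.card * m = ∑ _u ∈ s, m := by rw [Finset.sum_const, smul_eq_mul, mul_comm]
      _ ≤ ∑ u ∈ s, (f u).card := by
          refine Finset.sum_le_sum fun u hu => ?_
          have hle : m ≤ (sphH u r t).ncard := by
            rw [hm]
            exact Nat.sInf_le ⟨u, hC (by rwa [hs, Set.mem_toFinset] at hu), rfl⟩
          rw [hf]
          rwa [Set.ncard_eq_toFinset_card'] at hle
  have hsub : s.biUnion f ⊆ {v : L | ht v = t}.toFinset := by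
    intro w hw
    simp only [Finset.mem_biUnion] at hw
    obtain ⟨u, _, hw⟩ := hw
    simp only [hf] at hw ⊢
    rw [Set.mem_toFinset] at hw ⊢
    simp only [sphH, Set.mem_setOf_eq] at hw ⊢
    exact hw.2
  have key : C.ncard * m ≤ {v : L | ht v = t}.ncard := by
    rw [Set.ncard_eq_toFinset_card' C, Set.ncard_eq_toFinset_card']
    exact le_trans hcard (Finset.card_le_card hsub)
  rw [le_div_iff₀ (by exact_mod_cast hmpos)]
  exact_mod_cast key
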